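/- Let d ≥ 2 be even, q an odd prime power, χ a nontrivial additive character of F_q, and η the quadratic character. Let C = {x ∈ F_q^{d+1} : x_1² + ... + x_{d-1}² = x_d x_{d+1}}. Then for every m = (m', m_d, m_{d+1}) ∈ F_q^{d+1}, one has |C|^{-1} Σ_{x ∈ C} χ(m·x) = δ_0(m) + q^{-d} G_1^{d-1} Σ_{t ∈ F_q^*} η(t) χ((‖m'‖² − 4 m_d m_{d+1})/(−4t)), where ‖m'‖² = m_1² + ... + m_{d-1}², G_1 is the Gauss sum, and δ_0(m) = 1 if m = 0 and 0 otherwise. -/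

import Mathlib

open Finset

section Aux
variable {F : Type} [Field F] [Fintype F] [DecidableEq F]

/-- shorthand for the complex-valued quadratic character -/
noncomputable def qc (F : Type) [Field F] [Fintype F] [DecidableEq F] (s : F) : ℂ :=
  ((quadraticChar F s : ℤ) : ℂ)

lemma qc_zero : qc F 0 = 0 := by simp [qc]

lemma qc_mul (a b : F) : qc F (a * b) = qc F a * qc F b := by
  simp only [qc, map_mul]; push_cast; ring

lemma qc_sq {t : F} (ht : t ≠ 0) : qc F t * qc F t = 1 := by
  have := quadraticChar_sq_one (F := F) ht
  rw [sq] at this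
  simp only [qc]
  exact_mod_cast congrArg (fun z : ℤ => (z : ℂ)) this

lemma delta_sum (χ : AddChar F ℂ) (hχ : χ ≠ 1) (c : F) :
    ∑ t : F, χ (t * c) = if c = 0 then (Fintype.card F : ℂ) else 0 := by
  have := AddChar.sum_mulShift c (AddChar.IsPrimitive.of_ne_one hχ)
  rw [this]; split <;> simp

lemma card_sqrts (hchar : ringChar F ≠ 2) (y : F) :
    ((univ.filter (fun x : F => x ^ 2 = y)).card : ℂ) = qc F y + 1 := by
  have := quadraticChar_card_sqrts hchar y
  rw [Set.toFinset_setOf] at this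
  simp only [qc]
  exact_mod_cast congrArg (fun z : ℤ => (z : ℂ)) this

lemma achar_sum (χ : AddChar F ℂ) {ι : Type*} (s : Finset ι) (f : ι → F) :
    χ (∑ i ∈ s, f i) = ∏ i ∈ s, χ (f i) := by
  classical
  induction s using Finset.cons_induction with
  | empty => simp
  | cons a s ha ih => rw [Finset.sum_cons, Finset.prod_cons, AddChar.map_add_eq_mul, ih]

lemma qsum (hchar : ringChar F ≠ 2) (χ : AddChar F ℂ) (hχ : χ ≠ 1) {t : F} (ht : t ≠ 0) :
    ∑ x : F, χ (t * x ^ 2)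
      = qc F t * ∑ s ∈ univ.filter (fun s : F => s ≠ 0), qc F s * χ s := by
  have hG : ∑ s ∈ univ.filter (fun s : F => s ≠ 0), qc F s * χ s
      = ∑ s : F, qc F s * χ s := by
    rw [Finset.sum_filter]
    refine Finset.sum_congr rfl fun s _ => ?_
    by_cases hs : s = 0 <;> simp [hs, qc_zero]
  have step1 : ∑ x : F, χ (t * x ^ 2)
      = ∑ y : F, ((univ.filter (fun x : F => x ^ 2 = y)).card : ℂ) * χ (t * y) := by
    rw [← Finset.sum_fiberwise' univ (fun x : F => x ^ 2) (fun y => χ (t * y))]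
    refine Finset.sum_congr rfl fun y _ => ?_
    rw [Finset.sum_const, nsmul_eq_mul]
  rw [step1]
  simp only [card_sqrts hchar]
  rw [show (∑ y : F, (qc F y + 1) * χ (t * y))
      = (∑ y : F, qc F y * χ (t * y)) + ∑ y : F, χ (t * y) by
    rw [← Finset.sum_add_distrib]; exact Finset.sum_congr rfl fun y _ => by ring]
  have h2 : ∑ y : F, χ (t * y) = 0 := by
    have := delta_sum χ hχ t
    calc ∑ y : F, χ (t * y) = ∑ y : F, χ (y * t) := by
          exact Finset.sum_congr rfl fun y _ => by rw [mul_comm]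
      _ = 0 := by rw [this, if_neg ht]
  rw [h2, add_zero, hG, Finset.mul_sum]
  rw [← Equiv.sum_comp (Equiv.mulLeft₀ t ht) (fun y => qc F t * (qc F y * χ y))]
  refine Finset.sum_congr rfl fun y _ => ?_
  simp only [Equiv.mulLeft₀_apply]
  rw [qc_mul, ← mul_assoc, ← mul_assoc, qc_sq ht, one_mul]

lemma gsum (hchar : ringChar F ≠ 2) (χ : AddChar F ℂ) (hχ : χ ≠ 1) {t : F} (ht : t ≠ 0)
    (b : F) :
    ∑ x : F, χ (t * x ^ 2 + b * x)
      = qc F t * (∑ s ∈ univ.filter (fun s : F => s ≠ 0), qc F s * χ s)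
          * χ (-(b ^ 2) / (4 * t)) := by
  have h2 : (2 : F) ≠ 0 := Ring.two_ne_zero hchar
  have key : ∀ x : F, t * (x - b / (2 * t)) ^ 2 + b * (x - b / (2 * t))
      = t * x ^ 2 + (-(b ^ 2) / (4 * t)) := by
    intro x
    have h4 : (4 : F) ≠ 0 := by
      rw [show (4 : F) = 2 * 2 by norm_num]; exact mul_ne_zero h2 h2
    field_simp
    ring
  calc ∑ x : F, χ (t * x ^ 2 + b * x)
      = ∑ x : F, χ (t * (x - b / (2 * t)) ^ 2 + b * (x - b / (2 * t))) := by
        rw [← Equiv.sum_comp (Equiv.subRight (b / (2 * t))) (fun x => χ (t * x ^ 2 + b * x))]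
        refine Finset.sum_congr rfl fun x _ => ?_
        simp [Equiv.subRight_apply]
    _ = ∑ x : F, χ (t * x ^ 2) * χ (-(b ^ 2) / (4 * t)) := by
        refine Finset.sum_congr rfl fun x _ => ?_
        rw [key x, AddChar.map_add_eq_mul]
    _ = _ := by rw [← Finset.sum_mul, qsum hchar χ hχ ht]

lemma pairsum (χ : AddChar F ℂ) (hχ : χ ≠ 1) {t : F} (ht : t ≠ 0) (u v : F) :
    ∑ a : F, ∑ b : F, χ (-(t * (a * b)) + (u * a + v * b))
      = (Fintype.card F : ℂ) * χ (u * v / t) := by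
  have hd : ∀ c : F, ∑ a : F, χ (a * c) = if c = 0 then (Fintype.card F : ℂ) else 0 := by
    intro c
    have := AddChar.sum_mulShift c (AddChar.IsPrimitive.of_ne_one hχ)
    rw [this]; split <;> simp
  rw [Finset.sum_comm]
  have step : ∀ b : F, ∑ a : F, χ (-(t * (a * b)) + (u * a + v * b))
      = (if b = u / t then (Fintype.card F : ℂ) else 0) * χ (v * b) := by
    intro b
    calc ∑ a : F, χ (-(t * (a * b)) + (u * a + v * b))
        = ∑ a : F, χ (a * (u - t * b)) * χ (v * b) := by
          refine Finset.sum_congr rfl fun a _ => ?_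
          rw [← AddChar.map_add_eq_mul]
          congr 1
          ring
      _ = (∑ a : F, χ (a * (u - t * b))) * χ (v * b) := by rw [Finset.sum_mul]
      _ = _ := by
          rw [hd (u - t * b)]
          have : (u - t * b = 0) ↔ (b = u / t) := by
            rw [sub_eq_zero, eq_div_iff ht, mul_comm]
            exact eq_comm
          simp only [this]
  simp only [step, ite_mul, zero_mul]
  rw [Finset.sum_ite_eq' univ (u / t) (fun b => (Fintype.card F : ℂ) * χ (v * b))]
  rw [if_pos (Finset.mem_univ _)]
  congr 1
  field_simp

lemma T0sum {n : ℕ} (χ : AddChar F ℂ) (hχ : χ ≠ 1) (m : (Fin n → F) × F × F) :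
    ∑ x : (Fin n → F) × F × F,
        χ (∑ i, m.1 i * x.1 i + m.2.1 * x.2.1 + m.2.2 * x.2.2)
      = (Fintype.card F : ℂ) ^ (n + 2) * (if m = 0 then 1 else 0) := by
  have hd : ∀ c : F, ∑ z : F, χ (c * z) = if c = 0 then (Fintype.card F : ℂ) else 0 := by
    intro c
    have := AddChar.sum_mulShift c (AddChar.IsPrimitive.of_ne_one hχ)
    simp_rw [mul_comm c]
    rw [this]; split <;> simp
  calc ∑ x : (Fin n → F) × F × F,
        χ (∑ i, m.1 i * x.1 i + m.2.1 * x.2.1 + m.2.2 * x.2.2)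
      = ∑ y : Fin n → F, ∑ a : F, ∑ b : F,
          (∏ i, χ (m.1 i * y i)) * (χ (m.2.1 * a) * χ (m.2.2 * b)) := by
        rw [Fintype.sum_prod_type]
        refine Finset.sum_congr rfl fun y _ => ?_
        rw [Fintype.sum_prod_type]
        refine Finset.sum_congr rfl fun a _ => Finset.sum_congr rfl fun b _ => ?_
        rw [AddChar.map_add_eq_mul, AddChar.map_add_eq_mul, achar_sum, mul_assoc]
    _ = (∑ y : Fin n → F, ∏ i, χ (m.1 i * y i))
          * ((∑ a : F, χ (m.2.1 * a)) * (∑ b : F, χ (m.2.2 * b))) := by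
        simp_rw [← Finset.mul_sum, ← Finset.sum_mul]
    _ = (∏ i, ∑ z : F, χ (m.1 i * z))
          * ((∑ a : F, χ (m.2.1 * a)) * (∑ b : F, χ (m.2.2 * b))) := by
        congr 1
        rw [Fintype.prod_sum]
    _ = (∏ i, if m.1 i = 0 then (Fintype.card F : ℂ) else 0)
          * ((if m.2.1 = 0 then (Fintype.card F : ℂ) else 0)
              * (if m.2.2 = 0 then (Fintype.card F : ℂ) else 0)) := by
        simp_rw [hd]
    _ = (Fintype.card F : ℂ) ^ (n + 2) * (if m = 0 then 1 else 0) := by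
        by_cases hm : m = 0
        · simp only [hm, Prod.fst_zero, Prod.snd_zero, Pi.zero_apply, if_pos rfl,
            Finset.prod_const, Finset.card_univ, Fintype.card_fin, mul_one, if_true]
          ring
        · rw [if_neg hm, mul_zero]
          have : ¬(m.1 = 0 ∧ m.2.1 = 0 ∧ m.2.2 = 0) := by
            intro ⟨h1, h2, h3⟩
            exact hm (Prod.ext h1 (Prod.ext h2 h3))
          push_neg at this
          by_cases h1 : m.1 = 0
          · by_cases h2 : m.2.1 = 0
            · have h3 := this h1 h2
              rw [if_neg h3, mul_zero, mul_zero]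
            · rw [if_neg h2, zero_mul, mul_zero]
          · obtain ⟨i, hi⟩ := Function.ne_iff.mp h1
            have hi' : m.1 i ≠ 0 := by simpa using hi
            have hz : (if m.1 i = 0 then (Fintype.card F : ℂ) else 0) = 0 := if_neg hi'
            rw [Finset.prod_eq_zero (Finset.mem_univ i) hz, zero_mul]

lemma Ttsum {n : ℕ} (hchar : ringChar F ≠ 2) (hn : Odd n) (χ : AddChar F ℂ) (hχ : χ ≠ 1)
    {t : F} (ht : t ≠ 0) (m : (Fin n → F) × F × F) :
    ∑ x : (Fin n → F) × F × F,
        χ (t * ((∑ i, (x.1 i) ^ 2) - x.2.1 * x.2.2)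
            + (∑ i, m.1 i * x.1 i + m.2.1 * x.2.1 + m.2.2 * x.2.2))
      = (Fintype.card F : ℂ)
          * ((∑ s ∈ univ.filter (fun s : F => s ≠ 0), qc F s * χ s) ^ n
              * (qc F t * χ (((∑ i, (m.1 i) ^ 2) - 4 * m.2.1 * m.2.2) / (-4 * t)))) := by
  set G : ℂ := ∑ s ∈ univ.filter (fun s : F => s ≠ 0), qc F s * χ s with hGdef
  have h2 : (2 : F) ≠ 0 := Ring.two_ne_zero hchar
  have h4 : (4 : F) ≠ 0 := by
    rw [show (4 : F) = 2 * 2 by norm_num]; exact mul_ne_zero h2 h2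
  have harg : ∀ x : (Fin n → F) × F × F,
      t * ((∑ i, (x.1 i) ^ 2) - x.2.1 * x.2.2)
          + (∑ i, m.1 i * x.1 i + m.2.1 * x.2.1 + m.2.2 * x.2.2)
        = (∑ i, (t * (x.1 i) ^ 2 + m.1 i * x.1 i))
            + (-(t * (x.2.1 * x.2.2)) + (m.2.1 * x.2.1 + m.2.2 * x.2.2)) := by
    intro x
    rw [Finset.sum_add_distrib, ← Finset.mul_sum]
    ring
  obtain ⟨k, hk⟩ := hn
  calc ∑ x : (Fin n → F) × F × F,
        χ (t * ((∑ i, (x.1 i) ^ 2) - x.2.1 * x.2.2)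
            + (∑ i, m.1 i * x.1 i + m.2.1 * x.2.1 + m.2.2 * x.2.2))
      = ∑ y : Fin n → F, ∑ a : F, ∑ b : F,
          (∏ i, χ (t * (y i) ^ 2 + m.1 i * y i))
            * χ (-(t * (a * b)) + (m.2.1 * a + m.2.2 * b)) := by
        rw [Fintype.sum_prod_type]
        refine Finset.sum_congr rfl fun y _ => ?_
        rw [Fintype.sum_prod_type]
        refine Finset.sum_congr rfl fun a _ => Finset.sum_congr rfl fun b _ => ?_
        rw [harg ⟨y, a, b⟩, AddChar.map_add_eq_mul, achar_sum]
    _ = (∑ y : Fin n → F, ∏ i, χ (t * (y i) ^ 2 + m.1 i * y i))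
          * (∑ a : F, ∑ b : F, χ (-(t * (a * b)) + (m.2.1 * a + m.2.2 * b))) := by
        simp_rw [← Finset.mul_sum, ← Finset.sum_mul]
    _ = (∏ i, ∑ z : F, χ (t * z ^ 2 + m.1 i * z))
          * ((Fintype.card F : ℂ) * χ (m.2.1 * m.2.2 / t)) := by
        congr 1
        · rw [Fintype.prod_sum]
        · exact pairsum χ hχ ht m.2.1 m.2.2
    _ = (∏ i, qc F t * G * χ (-((m.1 i) ^ 2) / (4 * t)))
          * ((Fintype.card F : ℂ) * χ (m.2.1 * m.2.2 / t)) := by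
        congr 1
        exact Finset.prod_congr rfl fun i _ => gsum hchar χ hχ ht (m.1 i)
    _ = ((qc F t * G) ^ n * χ ((-(∑ i, (m.1 i) ^ 2)) / (4 * t)))
          * ((Fintype.card F : ℂ) * χ (m.2.1 * m.2.2 / t)) := by
        rw [Finset.prod_mul_distrib, Finset.prod_const, Finset.card_univ, Fintype.card_fin,
          ← achar_sum]
        congr 2
        rw [← Finset.sum_div, Finset.sum_neg_distrib]
    _ = ((qc F t) ^ n * G ^ n * χ ((-(∑ i, (m.1 i) ^ 2)) / (4 * t)))
          * ((Fintype.card F : ℂ) * χ (m.2.1 * m.2.2 / t)) := by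
        rw [mul_pow]
    _ = (qc F t * G ^ n * χ ((-(∑ i, (m.1 i) ^ 2)) / (4 * t)))
          * ((Fintype.card F : ℂ) * χ (m.2.1 * m.2.2 / t)) := by
        congr 3
        rw [hk, pow_succ, pow_mul, sq, qc_sq ht, one_pow, one_mul]
    _ = (Fintype.card F : ℂ)
          * (G ^ n * (qc F t
              * (χ ((-(∑ i, (m.1 i) ^ 2)) / (4 * t)) * χ (m.2.1 * m.2.2 / t)))) := by
        ring
    _ = _ := by
        congr 2
        congr 1
        rw [← AddChar.map_add_eq_mul]
        congr 1
        field_simp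
        ring


lemma keysum (hchar : ringChar F ≠ 2)
    (d : ℕ) (hd2 : 2 ≤ d) (hdeven : Even d)
    (χ : AddChar F ℂ) (hχ : χ ≠ 1)
    (m : (Fin (d - 1) → F) × F × F) :
    (∑ x ∈ univ.filter (fun x : (Fin (d - 1) → F) × F × F =>
          ∑ i, (x.1 i) ^ 2 = x.2.1 * x.2.2),
        χ (∑ i, m.1 i * x.1 i + m.2.1 * x.2.1 + m.2.2 * x.2.2)) =
      (Fintype.card F : ℂ) ^ d * (if m = 0 then 1 else 0) +
        (∑ s ∈ univ.filter (fun s : F => s ≠ 0),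
            ((quadraticChar F s : ℤ) : ℂ) * χ s) ^ (d - 1) *
          ∑ t ∈ univ.filter (fun t : F => t ≠ 0),
            ((quadraticChar F t : ℤ) : ℂ) *
              χ ((∑ i, (m.1 i) ^ 2 - 4 * m.2.1 * m.2.2) / (-4 * t)) := by
  classical
  have hq0 : (Fintype.card F : ℂ) ≠ 0 := by
    simp only [Ne, Nat.cast_eq_zero]
    exact Fintype.card_ne_zero
  have hd1 : 1 ≤ d := le_trans (by norm_num) hd2
  have hnodd : Odd (d - 1) := Nat.Even.sub_odd hd1 hdeven odd_one
  set G : ℂ := ∑ s ∈ univ.filter (fun s : F => s ≠ 0), qc F s * χ s with hGdef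
  set L : ((Fin (d - 1) → F) × F × F) → F :=
    fun x => ∑ i, m.1 i * x.1 i + m.2.1 * x.2.1 + m.2.2 * x.2.2 with hLdef
  set g : ((Fin (d - 1) → F) × F × F) → F :=
    fun x => (∑ i, (x.1 i) ^ 2) - x.2.1 * x.2.2 with hgdef
  have hA : ∑ t : F, ∑ x : (Fin (d - 1) → F) × F × F, χ (t * g x + L x)
      = (Fintype.card F : ℂ) *
          ∑ x ∈ univ.filter (fun x : (Fin (d - 1) → F) × F × F =>
            ∑ i, (x.1 i) ^ 2 = x.2.1 * x.2.2), χ (L x) := by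
    calc ∑ t : F, ∑ x : (Fin (d - 1) → F) × F × F, χ (t * g x + L x)
        = ∑ x : (Fin (d - 1) → F) × F × F, ∑ t : F, χ (t * g x) * χ (L x) := by
          rw [Finset.sum_comm]
          exact Finset.sum_congr rfl fun x _ => Finset.sum_congr rfl fun t _ =>
            AddChar.map_add_eq_mul χ _ _
      _ = ∑ x : (Fin (d - 1) → F) × F × F, (if g x = 0 then (Fintype.card F : ℂ) else 0)
            * χ (L x) := by
          refine Finset.sum_congr rfl fun x _ => ?_
          rw [← Finset.sum_mul, delta_sum χ hχ]
      _ = ∑ x : (Fin (d - 1) → F) × F × F,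
            (if (∑ i, (x.1 i) ^ 2 = x.2.1 * x.2.2) then (Fintype.card F : ℂ) * χ (L x)
              else 0) := by
          refine Finset.sum_congr rfl fun x _ => ?_
          rw [ite_mul, zero_mul]
          congr 1
          simp only [hgdef, sub_eq_zero]
      _ = (Fintype.card F : ℂ) *
            ∑ x ∈ univ.filter (fun x : (Fin (d - 1) → F) × F × F =>
              ∑ i, (x.1 i) ^ 2 = x.2.1 * x.2.2), χ (L x) := by
          rw [← Finset.sum_filter, Finset.mul_sum]
  have hsplit : ∑ t : F, ∑ x : (Fin (d - 1) → F) × F × F, χ (t * g x + L x)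
      = (∑ x : (Fin (d - 1) → F) × F × F, χ (0 * g x + L x))
        + ∑ t ∈ univ.filter (fun t : F => t ≠ 0),
            ∑ x : (Fin (d - 1) → F) × F × F, χ (t * g x + L x) := by
    rw [Finset.filter_ne' univ 0]
    exact (Finset.add_sum_erase univ _ (Finset.mem_univ 0)).symm
  have hT0 : (∑ x : (Fin (d - 1) → F) × F × F, χ (0 * g x + L x))
      = (Fintype.card F : ℂ) ^ (d + 1) * (if m = 0 then 1 else 0) := by
    have h := T0sum χ hχ m
    rw [show d - 1 + 2 = d + 1 from by omega] at h
    simp only [zero_mul, zero_add, hLdef]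
    exact h
  have hTt : ∀ t ∈ univ.filter (fun t : F => t ≠ 0),
      ∑ x : (Fin (d - 1) → F) × F × F, χ (t * g x + L x)
        = (Fintype.card F : ℂ) * (G ^ (d - 1) * (qc F t *
            χ (((∑ i, (m.1 i) ^ 2) - 4 * m.2.1 * m.2.2) / (-4 * t)))) := by
    intro t htf
    have ht := (Finset.mem_filter.mp htf).2
    have h := Ttsum hchar hnodd χ hχ ht m
    simp only [hLdef, hgdef]
    exact h
  have hfinal : (Fintype.card F : ℂ) *
      (∑ x ∈ univ.filter (fun x : (Fin (d - 1) → F) × F × F =>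
          ∑ i, (x.1 i) ^ 2 = x.2.1 * x.2.2), χ (L x))
      = (Fintype.card F : ℂ) *
          ((Fintype.card F : ℂ) ^ d * (if m = 0 then 1 else 0) +
            G ^ (d - 1) * ∑ t ∈ univ.filter (fun t : F => t ≠ 0),
              qc F t * χ (((∑ i, (m.1 i) ^ 2) - 4 * m.2.1 * m.2.2) / (-4 * t))) := by
    rw [← hA, hsplit, hT0, Finset.sum_congr rfl hTt, ← Finset.mul_sum, ← Finset.mul_sum,
      pow_succ]
    ring
  have hcancel := mul_left_cancel₀ hq0 hfinal
  rw [hcancel, hGdef]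
  simp only [qc]

end Aux

theorem fourier_formula_C
    (F : Type) [Field F] [Fintype F] [DecidableEq F]
    (hchar : ringChar F ≠ 2)
    (d : ℕ) (hd2 : 2 ≤ d) (hdeven : Even d)
    (χ : AddChar F ℂ) (hχ : χ ≠ 1)
    (m : (Fin (d - 1) → F) × F × F) :
    (((univ.filter (fun x : (Fin (d - 1) → F) × F × F =>
          ∑ i, (x.1 i) ^ 2 = x.2.1 * x.2.2)).card : ℂ))⁻¹ *
      (∑ x ∈ univ.filter (fun x : (Fin (d - 1) → F) × F × F =>
          ∑ i, (x.1 i) ^ 2 = x.2.1 * x.2.2),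
        χ (∑ i, m.1 i * x.1 i + m.2.1 * x.2.1 + m.2.2 * x.2.2)) =
      (if m = 0 then 1 else 0) +
        ((Fintype.card F : ℂ) ^ d)⁻¹ *
          (∑ s ∈ univ.filter (fun s : F => s ≠ 0),
            ((quadraticChar F s : ℤ) : ℂ) * χ s) ^ (d - 1) *
          ∑ t ∈ univ.filter (fun t : F => t ≠ 0),
            ((quadraticChar F t : ℤ) : ℂ) *
              χ ((∑ i, (m.1 i) ^ 2 - 4 * m.2.1 * m.2.2) / (-4 * t)) := by
  classical
  have hq0 : (Fintype.card F : ℂ) ≠ 0 := by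
    simp only [Ne, Nat.cast_eq_zero]
    exact Fintype.card_ne_zero
  have hcard : (((univ.filter (fun x : (Fin (d - 1) → F) × F × F =>
        ∑ i, (x.1 i) ^ 2 = x.2.1 * x.2.2)).card : ℂ)) = (Fintype.card F : ℂ) ^ d := by
    have h0 := keysum hchar d hd2 hdeven χ hχ 0
    have hz : ∑ t ∈ univ.filter (fun t : F => t ≠ 0), ((quadraticChar F t : ℤ) : ℂ) = 0 := by
      have hz' := quadraticChar_sum_zero hchar
      have hstep : ∑ t ∈ univ.filter (fun t : F => t ≠ 0), ((quadraticChar F t : ℤ) : ℂ)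
          = ∑ t : F, ((quadraticChar F t : ℤ) : ℂ) := by
        rw [Finset.sum_filter]
        refine Finset.sum_congr rfl fun t _ => ?_
        by_cases h : t = 0 <;> simp [h]
      rw [hstep]
      exact_mod_cast congrArg (fun z : ℤ => (z : ℂ)) hz'
    simp only [Prod.fst_zero, Prod.snd_zero, Pi.zero_apply, zero_mul, mul_zero,
      Finset.sum_const_zero, add_zero, zero_add, AddChar.map_zero_eq_one, mul_one,
      if_pos rfl, ne_eq, OfNat.ofNat_ne_zero, not_false_eq_true, zero_pow, zero_div,
      sub_zero, Finset.sum_const, nsmul_eq_mul] at h0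
    rw [h0, if_true, mul_one]
    have hz' : ∑ x ∈ filter (fun s : F => ¬s = 0) univ, ((quadraticChar F x : ℤ) : ℂ) = 0 := hz
    rw [hz', mul_zero, add_zero]
  rw [hcard, keysum hchar d hd2 hdeven χ hχ m]
  have hqd : (Fintype.card F : ℂ) ^ d ≠ 0 := pow_ne_zero d hq0
  field_simp
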